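/- Suppose β, γ, and a sequence θ_0, ..., θ_d in a field K satisfy θ_{i-1} - β·θ_i + θ_{i+1} = γ for all 1 ≤ i ≤ d-1 with d ≥ 2. If additionally θ_i² - β·θ_i·θ_{i-1} + θ_{i-1}² - γ(θ_i + θ_{i-1}) = ϱ holds for i = 1, then it holds for all 1 ≤ i ≤ d. -/
import Mathlib

theorem stmt3 {K : Type*} [Field K] (d : ℕ) (hd : 2 ≤ d) (β γ ϱ : K)
    (θ : ℕ → K)
    (hrec : ∀ i : ℕ, 1 ≤ i → i ≤ d - 1 → θ (i - 1) - β * θ i + θ (i + 1) = γ)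
    (h1 : θ 1 ^ 2 - β * θ 1 * θ 0 + θ 0 ^ 2 - γ * (θ 1 + θ 0) = ϱ) :
    ∀ i : ℕ, 1 ≤ i → i ≤ d →
      θ i ^ 2 - β * θ i * θ (i - 1) + θ (i - 1) ^ 2 - γ * (θ i + θ (i - 1)) = ϱ := by
  intro i hi hid
  induction i with
  | zero => omega
  | succ n ih =>
    rcases Nat.eq_zero_or_pos n with hn0 | hn1
    · subst hn0; simpa using h1
    · have hnd : n ≤ d - 1 := by omega
      have E := hrec n hn1 hnd
      have ihn := ih hn1 (by omega)
      simp only [Nat.add_sub_cancel]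
      linear_combination ihn + (θ (n + 1) - θ (n - 1)) * E
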